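/- Let M be a finite J-trivial monoid and x ∈ M. Then the set rAut(x) := {u ∈ M : x·u = x} is a submonoid of M, and there exists a unique idempotent rfix(x) ∈ M such that rAut(x) = {u ∈ M : rfix(x) ≤_J u}; in particular rfix(x) is the minimum, with respect to ≤_J, of the idempotents e with x·e = x. Symmetrically, {u ∈ M : u·x = x} is a submonoid and there exists a unique idempotent lfix(x) with {u ∈ M : u·x = x} = {u ∈ M : lfix(x) ≤_J u}. -/
import Mathlib

/-- The `J`-preorder on a monoid: `x ≤_J y` iff `x = u * y * v` for some `u, v`. -/
def leJ {M : Type*} [Monoid M] (x y : M) : Prop := ∃ u v : M, x = u * y * v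

/-- A monoid is `J`-trivial if `M x M = M y M` implies `x = y`. -/
def JTrivial (M : Type*) [Monoid M] : Prop :=
  ∀ x y : M, {z : M | ∃ u v : M, z = u * x * v} = {z : M | ∃ u v : M, z = u * y * v} → x = y

section Aux
variable {M : Type*} [Monoid M]

lemma leJ_antisymm (hJ : JTrivial M) {a b : M} (h1 : leJ a b) (h2 : leJ b a) : a = b := by
  obtain ⟨u, v, rfl⟩ := h1
  obtain ⟨c, d, hb⟩ := h2
  apply hJ
  ext z
  constructor
  · rintro ⟨p, q, rfl⟩
    refine ⟨p * u, v * q, by simp [mul_assoc]⟩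
  · rintro ⟨p, q, rfl⟩
    refine ⟨p * c, d * q, ?_⟩
    conv_lhs => rw [hb]
    simp [mul_assoc]

lemma r_cancel (hJ : JTrivial M) {x d c : M} (h : x = x * d * c) : x = x * d := by
  apply hJ
  ext z
  constructor
  · rintro ⟨p, q, rfl⟩
    refine ⟨p, c * q, ?_⟩
    conv_lhs => rw [h]
    simp [mul_assoc]
  · rintro ⟨p, q, rfl⟩
    exact ⟨p, d * q, by simp [mul_assoc]⟩

lemma l_cancel (hJ : JTrivial M) {x d c : M} (h : x = c * (d * x)) : x = d * x := by
  apply hJ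
  ext z
  constructor
  · rintro ⟨p, q, rfl⟩
    refine ⟨p * c, q, ?_⟩
    conv_lhs => rw [h]
    simp [mul_assoc]
  · rintro ⟨p, q, rfl⟩
    exact ⟨p * d, q, by simp [mul_assoc]⟩

lemma r_absorb (hJ : JTrivial M) {x e u : M} (he : x * e = x) (h : leJ e u) : x * u = x := by
  obtain ⟨a, b, rfl⟩ := h
  have h1 : x = x * (a * u) * b := by
    conv_lhs => rw [← he]
    simp [mul_assoc]
  have h2 : x = x * (a * u) := r_cancel hJ h1
  rw [← mul_assoc] at h2
  have h3 : x = x * a := r_cancel hJ h2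
  calc x * u = x * a * u := by conv_lhs => rw [h3]
    _ = x := h2.symm

lemma l_absorb (hJ : JTrivial M) {x e u : M} (he : e * x = x) (h : leJ e u) : u * x = x := by
  obtain ⟨a, b, rfl⟩ := h
  have h1 : x = a * ((u * b) * x) := by
    conv_lhs => rw [← he]
    simp [mul_assoc]
  have h2 : x = (u * b) * x := l_cancel hJ h1
  have h2' : x = u * (b * x) := by rw [mul_assoc] at h2; exact h2
  have h3 : x = b * x := l_cancel hJ h2'
  calc u * x = u * (b * x) := by rw [← h3]
    _ = x := h2'.symm

lemma exists_idem_pow [Finite M] (a : M) : ∃ n : ℕ, 0 < n ∧ IsIdempotentElem (a ^ n) := by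
  obtain ⟨m, n, hmn, h⟩ := Finite.exists_ne_map_eq_of_infinite (fun k : ℕ => a ^ k)
  wlog hlt : m < n generalizing m n
  · exact this n m hmn.symm h.symm (by omega)
  set d := n - m with hd
  have hd0 : 0 < d := by omega
  have key : ∀ k, a ^ (m + k) = a ^ (m + d + k) := by
    intro k
    rw [show m + d = n by omega, pow_add, pow_add, ← h]
  have per : ∀ j k, a ^ (m + k) = a ^ (m + j * d + k) := by
    intro j
    induction j with
    | zero => simp
    | succ j ih =>
        intro k
        rw [ih k, show m + (j+1) * d + k = m + d + (j * d + k) by ring,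
          ← key (j * d + k), show m + (j*d+k) = m + j*d + k by ring]
  have hge : m + 1 ≤ (m+1) * d := Nat.le_mul_of_pos_right (m+1) hd0
  refine ⟨(m + 1) * d, by positivity, ?_⟩
  have h1 := per (m+1) ((m+1)*d - m)
  rw [show m + ((m+1)*d - m) = (m+1)*d by omega,
      show m + (m+1)*d + ((m+1)*d - m) = (m+1)*d + (m+1)*d by omega] at h1
  unfold IsIdempotentElem
  rw [← pow_add]
  exact h1.symm

lemma r_prod (x : M) : ∀ L : List M, (∀ u ∈ L, x * u = x) → x * L.prod = x := by
  intro L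
  induction L with
  | nil => simp
  | cons a t ih =>
      intro h
      rw [List.prod_cons, ← mul_assoc, h a (by simp), ih (fun u hu => h u (by simp [hu]))]

lemma l_prod (x : M) : ∀ L : List M, (∀ u ∈ L, u * x = x) → L.prod * x = x := by
  intro L
  induction L with
  | nil => simp
  | cons a t ih =>
      intro h
      rw [List.prod_cons, mul_assoc, ih (fun u hu => h u (by simp [hu])), h a (by simp)]

lemma r_pow {x p : M} (h : x * p = x) : ∀ n, x * p ^ n = x := by
  intro n
  induction n with
  | zero => simp
  | succ k ih => rw [pow_succ, ← mul_assoc, ih, h]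

lemma l_pow {x p : M} (h : p * x = x) : ∀ n, p ^ n * x = x := by
  intro n
  induction n with
  | zero => simp
  | succ k ih => rw [pow_succ, mul_assoc, h, ih]

end Aux

/-- In a finite `J`-trivial monoid, for any `x` the set `rAut(x) = {u | x * u = x}` is a
submonoid, and there is a unique idempotent `rfix x` with `rAut(x) = {u | rfix x ≤_J u}`;
in particular `rfix x` is the `≤_J`-minimum of the idempotents `e` with `x * e = x`.
Symmetrically on the left. -/
theorem rAut_submonoid_and_rfix {M : Type*} [Monoid M] [Fintype M] (hJ : JTrivial M)
    (x : M) :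
    (∃ S : Submonoid M, (S : Set M) = {u : M | x * u = x}) ∧
    (∃! e : M, IsIdempotentElem e ∧ {u : M | x * u = x} = {u : M | leJ e u}) ∧
    (∀ e : M, (IsIdempotentElem e ∧ {u : M | x * u = x} = {u : M | leJ e u}) →
      x * e = x ∧ ∀ f : M, IsIdempotentElem f → x * f = x → leJ e f) ∧
    (∃ S : Submonoid M, (S : Set M) = {u : M | u * x = x}) ∧
    (∃! e : M, IsIdempotentElem e ∧ {u : M | u * x = x} = {u : M | leJ e u}) ∧
    (∀ e : M, (IsIdempotentElem e ∧ {u : M | u * x = x} = {u : M | leJ e u}) →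
      e * x = x ∧ ∀ f : M, IsIdempotentElem f → f * x = x → leJ e f) := by
  classical
  -- right-hand data
  have rmain : ∃ e : M, IsIdempotentElem e ∧ {u : M | x * u = x} = {u : M | leJ e u} := by
    set l := (Finset.univ.filter (fun u : M => x * u = x)).toList with hl
    have hlmem : ∀ u : M, x * u = x ↔ u ∈ l := by
      intro u
      simp [hl, Finset.mem_toList]
    have hp : x * l.prod = x := r_prod x l (fun u hu => (hlmem u).2 hu)
    obtain ⟨n, hn, hidem⟩ := exists_idem_pow l.prod
    refine ⟨l.prod ^ n, hidem, ?_⟩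
    ext u
    simp only [Set.mem_setOf_eq]
    constructor
    · intro hu
      obtain ⟨l₁, l₂, hsplit⟩ := List.append_of_mem ((hlmem u).1 hu)
      obtain ⟨k, rfl⟩ : ∃ k, n = k + 1 := ⟨n - 1, by omega⟩
      have hprod : l.prod = l₁.prod * (u * l₂.prod) := by
        rw [hsplit]; simp [List.prod_append, List.prod_cons, mul_assoc]
      refine ⟨(l₁.prod * (u * l₂.prod)) ^ k * l₁.prod, l₂.prod, ?_⟩
      rw [hprod, pow_succ]
      simp [mul_assoc]
    · exact r_absorb hJ (r_pow hp n)
  obtain ⟨e, he, hset⟩ := rmain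
  -- left-hand data
  have lmain : ∃ e : M, IsIdempotentElem e ∧ {u : M | u * x = x} = {u : M | leJ e u} := by
    set l := (Finset.univ.filter (fun u : M => u * x = x)).toList with hl
    have hlmem : ∀ u : M, u * x = x ↔ u ∈ l := by
      intro u
      simp [hl, Finset.mem_toList]
    have hp : l.prod * x = x := l_prod x l (fun u hu => (hlmem u).2 hu)
    obtain ⟨n, hn, hidem⟩ := exists_idem_pow l.prod
    refine ⟨l.prod ^ n, hidem, ?_⟩
    ext u
    simp only [Set.mem_setOf_eq]
    constructor
    · intro hu
      obtain ⟨l₁, l₂, hsplit⟩ := List.append_of_mem ((hlmem u).1 hu)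
      obtain ⟨k, rfl⟩ : ∃ k, n = k + 1 := ⟨n - 1, by omega⟩
      have hprod : l.prod = l₁.prod * (u * l₂.prod) := by
        rw [hsplit]; simp [List.prod_append, List.prod_cons, mul_assoc]
      refine ⟨(l₁.prod * (u * l₂.prod)) ^ k * l₁.prod, l₂.prod, ?_⟩
      rw [hprod, pow_succ]
      simp [mul_assoc]
    · exact l_absorb hJ (l_pow hp n)
  obtain ⟨e', he', hset'⟩ := lmain
  have selfmem : ∀ a : M, leJ a a := fun a => ⟨1, 1, by simp⟩
  refine ⟨⟨{ carrier := {u : M | x * u = x},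
             mul_mem' := ?_, one_mem' := by simp }, rfl⟩, ?_, ?_,
          ⟨{ carrier := {u : M | u * x = x},
             mul_mem' := ?_, one_mem' := by simp }, rfl⟩, ?_, ?_⟩
  · intro a b ha hb
    show x * (a * b) = x
    rw [← mul_assoc, ha, hb]
  · refine ⟨e, ⟨he, hset⟩, ?_⟩
    rintro f ⟨hf, hfset⟩
    have h1 : x * f = x := by
      have : f ∈ {u : M | leJ f u} := selfmem f
      rw [← hfset] at this
      exact this
    have h2 : x * e = x := by
      have : e ∈ {u : M | leJ e u} := selfmem e
      rw [← hset] at this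
      exact this
    have hfe : leJ f e := by rw [Set.ext_iff] at hfset; exact (hfset e).1 h2
    have hef : leJ e f := by rw [Set.ext_iff] at hset; exact (hset f).1 h1
    exact leJ_antisymm hJ hfe hef
  · rintro g ⟨hg, hgset⟩
    have h1 : x * g = x := by
      have : g ∈ {u : M | leJ g u} := selfmem g
      rw [← hgset] at this
      exact this
    exact ⟨h1, fun f _ hf => by rw [Set.ext_iff] at hgset; exact (hgset f).1 hf⟩
  · intro a b ha hb
    show (a * b) * x = x
    rw [mul_assoc, hb, ha]
  · refine ⟨e', ⟨he', hset'⟩, ?_⟩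
    rintro f ⟨hf, hfset⟩
    have h1 : f * x = x := by
      have : f ∈ {u : M | leJ f u} := selfmem f
      rw [← hfset] at this
      exact this
    have h2 : e' * x = x := by
      have : e' ∈ {u : M | leJ e' u} := selfmem e'
      rw [← hset'] at this
      exact this
    have hfe : leJ f e' := by rw [Set.ext_iff] at hfset; exact (hfset e').1 h2
    have hef : leJ e' f := by rw [Set.ext_iff] at hset'; exact (hset' f).1 h1
    exact leJ_antisymm hJ hfe hef
  · rintro g ⟨hg, hgset⟩
    have h1 : g * x = x := by
      have : g ∈ {u : M | leJ g u} := selfmem g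
      rw [← hgset] at this
      exact this
    exact ⟨h1, fun f _ hf => by rw [Set.ext_iff] at hgset; exact (hgset f).1 hf⟩
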